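/- Let t ≥ s ≥ 2 be integers with C(t−s,2) ≤ s−1, and define g(z) = z^{t−1}(1−z)^{s−1} + z^{s−1}(1−z)^{t−1} for z ∈ [0,1]. Then g attains its maximum on [0,1] uniquely at z = 1/2. -/

import Mathlib

open Finset

private lemma two_pow_fact_le (j : ℕ) : 2 ^ j * j.factorial ≤ (2 * j).factorial := by
  induction j with
  | zero => simp
  | succ n ih =>
    have h : 2 * (n + 1) = 2 * n + 1 + 1 := by ring
    rw [h, Nat.factorial_succ, Nat.factorial_succ]
    calc 2 ^ (n + 1) * ((n + 1) * n.factorial)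
        = (2 * n + 1 + 1) * (2 ^ n * n.factorial) := by ring
      _ ≤ (2 * n + 1 + 1) * ((2 * n + 1) * (2 * n).factorial) := by
          apply Nat.mul_le_mul_left
          calc 2 ^ n * n.factorial ≤ (2 * n).factorial := ih
            _ ≤ (2 * n + 1) * (2 * n).factorial := Nat.le_mul_of_pos_left _ (by omega)

private lemma desc_le (d j : ℕ) : Nat.descFactorial d (2 * j) ≤ (2 * Nat.choose d 2) ^ j := by
  induction j with
  | zero => simp
  | succ n ih =>
    have h2 : 2 * Nat.choose d 2 = (d - 1) * d := by
      have := Nat.descFactorial_eq_factorial_mul_choose d 2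
      simp [Nat.descFactorial] at this
      omega
    have h : 2 * (n + 1) = 2 * n + 1 + 1 := by ring
    rw [h, Nat.descFactorial_succ, Nat.descFactorial_succ, pow_succ]
    have hb : (d - (2 * n + 1)) * (d - 2 * n) ≤ (d - 1) * d :=
      Nat.mul_le_mul (Nat.sub_le_sub_left (by omega) d) (Nat.sub_le d (2 * n))
    calc (d - (2 * n + 1)) * ((d - 2 * n) * Nat.descFactorial d (2 * n))
        = ((d - (2 * n + 1)) * (d - 2 * n)) * Nat.descFactorial d (2 * n) := by ring
      _ ≤ ((d - 1) * d) * (2 * Nat.choose d 2) ^ n := Nat.mul_le_mul hb ih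
      _ = (2 * Nat.choose d 2) ^ n * (2 * Nat.choose d 2) := by rw [h2]; ring

private lemma choose_le_choose (s d : ℕ) (hs : 2 ≤ s) (hC : d.choose 2 ≤ s - 1) (j : ℕ) :
    d.choose (2 * j) ≤ (s - 2 + j).choose j := by
  have h1 : (2 * j).factorial * d.choose (2 * j) = Nat.descFactorial d (2 * j) :=
    (Nat.descFactorial_eq_factorial_mul_choose d (2 * j)).symm
  have h2 : 2 ^ j * (j.factorial * d.choose (2 * j)) ≤ 2 ^ j * (d.choose 2) ^ j := by
    calc 2 ^ j * (j.factorial * d.choose (2 * j))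
        = (2 ^ j * j.factorial) * d.choose (2 * j) := by ring
      _ ≤ (2 * j).factorial * d.choose (2 * j) :=
          Nat.mul_le_mul_right _ (two_pow_fact_le j)
      _ = Nat.descFactorial d (2 * j) := h1
      _ ≤ (2 * d.choose 2) ^ j := desc_le d j
      _ = 2 ^ j * (d.choose 2) ^ j := mul_pow 2 _ j
  have h3 : j.factorial * d.choose (2 * j) ≤ (d.choose 2) ^ j :=
    Nat.le_of_mul_le_mul_left h2 (by positivity)
  have h5 : (s - 1) ^ j ≤ j.factorial * (s - 2 + j).choose j := by
    have h : (s - 2 + 1) ^ j ≤ j.factorial * (s - 2 + j).choose j := by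
      rw [← Nat.ascFactorial_eq_factorial_mul_choose]
      exact Nat.pow_succ_le_ascFactorial _ j
    rwa [show s - 2 + 1 = s - 1 by omega] at h
  have h6 : j.factorial * d.choose (2 * j) ≤ j.factorial * (s - 2 + j).choose j := by
    calc j.factorial * d.choose (2 * j) ≤ (d.choose 2) ^ j := h3
      _ ≤ (s - 1) ^ j := Nat.pow_le_pow_left hC j
      _ ≤ j.factorial * (s - 2 + j).choose j := h5
  exact Nat.le_of_mul_le_mul_left h6 (Nat.factorial_pos j)

private lemma even_pow_sum (d : ℕ) (u : ℝ) :
    (1 + u) ^ d + (1 - u) ^ d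
      = 2 * ∑ j ∈ range (d + 1), (d.choose (2 * j) : ℝ) * (u ^ 2) ^ j := by
  have h1 : (1 + u) ^ d = ∑ k ∈ range (d + 1), u ^ k * (d.choose k : ℝ) := by
    rw [add_comm, add_pow]; simp
  have h2 : (1 - u) ^ d = ∑ k ∈ range (d + 1), (-u) ^ k * (d.choose k : ℝ) := by
    rw [sub_eq_add_neg, add_comm, add_pow]; simp
  rw [h1, h2, ← Finset.sum_add_distrib]
  have key : ∀ k ∈ range (d + 1),
      u ^ k * (d.choose k : ℝ) + (-u) ^ k * (d.choose k : ℝ)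
        = if Even k then 2 * u ^ k * (d.choose k : ℝ) else 0 := by
    intro k _
    by_cases hk : Even k
    · rw [if_pos hk, hk.neg_pow]; ring
    · rw [if_neg hk, (Nat.not_even_iff_odd.mp hk).neg_pow]; ring
  rw [Finset.sum_congr rfl key, ← Finset.sum_filter]
  have himg : (range (d + 1)).filter (fun k => Even k)
      = (range (d / 2 + 1)).image (fun j => 2 * j) := by
    ext k
    simp only [mem_filter, mem_range, mem_image]
    constructor
    · rintro ⟨hk, r, hr⟩
      exact ⟨r, by omega, by omega⟩
    · rintro ⟨j, hj, rfl⟩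
      exact ⟨by omega, ⟨j, by omega⟩⟩
  rw [himg, Finset.sum_image (by intro a _ b _ h; simp only at h; omega)]
  have hext : ∑ j ∈ range (d / 2 + 1), 2 * u ^ (2 * j) * (d.choose (2 * j) : ℝ)
      = ∑ j ∈ range (d + 1), 2 * u ^ (2 * j) * (d.choose (2 * j) : ℝ) := by
    apply Finset.sum_subset (Finset.range_subset_range.mpr (by omega))
    intro j _ hj
    simp only [mem_range, not_lt] at hj
    rw [Nat.choose_eq_zero_of_lt (by omega)]
    simp
  rw [hext, Finset.mul_sum]
  apply Finset.sum_congr rfl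
  intro j _
  rw [pow_mul]
  ring

private lemma pascal_sum (r N : ℕ) (y : ℝ) :
    (1 - y) * ∑ j ∈ range (N + 1), ((r + 1 + j).choose j : ℝ) * y ^ j
      = ∑ j ∈ range (N + 1), ((r + j).choose j : ℝ) * y ^ j
        - ((r + 1 + N).choose N : ℝ) * y ^ (N + 1) := by
  induction N with
  | zero => simp
  | succ n ih =>
    rw [Finset.sum_range_succ, Finset.sum_range_succ (f := fun j => ((r + j).choose j : ℝ) * y ^ j),
      mul_add, ih]
    have hp : ((r + 1 + (n + 1)).choose (n + 1) : ℝ)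
        = ((r + 1 + n).choose n : ℝ) + ((r + (n + 1)).choose (n + 1) : ℝ) := by
      rw [show r + 1 + (n + 1) = (r + 1 + n) + 1 by ring, Nat.choose_succ_succ,
        show r + 1 + n = r + (n + 1) by ring]
      push_cast
      ring
    rw [hp]
    ring

private lemma lemA (r : ℕ) : ∀ (N : ℕ) (y : ℝ), 0 < y → y < 1 →
    (1 - y) ^ (r + 1) * ∑ j ∈ range (N + 1), ((r + j).choose j : ℝ) * y ^ j < 1 := by
  induction r with
  | zero =>
    intro N y hy0 hy1
    have hs : ∑ j ∈ range (N + 1), ((0 + j).choose j : ℝ) * y ^ j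
        = ∑ j ∈ range (N + 1), y ^ j := by
      apply Finset.sum_congr rfl; intro j _; simp
    rw [hs, pow_one]
    have h := geom_sum_mul y (N + 1)
    nlinarith [pow_pos hy0 (N + 1)]
  | succ n ih =>
    intro N y hy0 hy1
    have h1 : (0 : ℝ) < 1 - y := by linarith
    have key := pascal_sum n N y
    calc (1 - y) ^ (n + 1 + 1) * ∑ j ∈ range (N + 1), ((n + 1 + j).choose j : ℝ) * y ^ j
        = (1 - y) ^ (n + 1) * ((1 - y) * ∑ j ∈ range (N + 1), ((n + 1 + j).choose j : ℝ) * y ^ j) := by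
          ring
      _ = (1 - y) ^ (n + 1) * (∑ j ∈ range (N + 1), ((n + j).choose j : ℝ) * y ^ j
            - ((n + 1 + N).choose N : ℝ) * y ^ (N + 1)) := by rw [key]
      _ ≤ (1 - y) ^ (n + 1) * ∑ j ∈ range (N + 1), ((n + j).choose j : ℝ) * y ^ j := by
          apply mul_le_mul_of_nonneg_left _ (le_of_lt (pow_pos h1 _))
          have hnn : (0 : ℝ) ≤ ((n + 1 + N).choose N : ℝ) * y ^ (N + 1) := by positivity
          linarith
      _ < 1 := ih N y hy0 hy1

/-- `g(z) = z^{t−1}(1−z)^{s−1} + z^{s−1}(1−z)^{t−1}` attains its maximum on `[0,1]`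
uniquely at `z = 1/2`. -/
theorem g_max_at_half (s t : ℕ) (hs : 2 ≤ s) (hst : s ≤ t)
    (hC : Nat.choose (t - s) 2 ≤ s - 1)
    (g : ℝ → ℝ)
    (hg : ∀ z, g z = z ^ (t - 1) * (1 - z) ^ (s - 1) + z ^ (s - 1) * (1 - z) ^ (t - 1)) :
    ∀ z ∈ Set.Icc (0 : ℝ) 1, z ≠ 1 / 2 → g z < g (1 / 2) := by
  intro z hz hne
  obtain ⟨hz0, hz1⟩ := hz
  set d : ℕ := t - s with hd
  set u : ℝ := 2 * z - 1 with hu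
  set y : ℝ := u ^ 2 with hy
  have hu0 : u ≠ 0 := by
    intro h
    apply hne
    rw [hu] at h
    linarith [h]
  have hy0 : 0 < y := by rw [hy]; positivity
  have hy1 : y ≤ 1 := by rw [hy, hu]; nlinarith
  have hts : t - 1 = (s - 1) + d := by omega
  have hS : z ^ d + (1 - z) ^ d
      = (1 / 2) ^ d * (2 * ∑ j ∈ range (d + 1), (d.choose (2 * j) : ℝ) * y ^ j) := by
    have hz' : z = (1 + u) / 2 := by rw [hu]; ring
    rw [hz', show (1 : ℝ) - (1 + u) / 2 = (1 - u) / 2 by ring, div_pow, div_pow, hy,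
      ← even_pow_sum d u]
    ring_nf
    rw [one_div]
  have hprod : z * (1 - z) = (1 - y) / 4 := by rw [hy, hu]; ring
  have hgz : g z = ((1 - y) / 4) ^ (s - 1) * ((1 / 2) ^ d
      * (2 * ∑ j ∈ range (d + 1), (d.choose (2 * j) : ℝ) * y ^ j)) := by
    rw [hg, hts, pow_add, pow_add, ← hS, ← hprod, mul_pow]
    ring
  have hghalf : g (1 / 2) = ((1 : ℝ) / 4) ^ (s - 1) * ((1 / 2) ^ d * 2) := by
    rw [hg, hts, pow_add, pow_add]
    norm_num
    rw [show ((1:ℝ)/4) = (1/2) * (1/2) by norm_num, mul_pow]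
    ring
  rw [hgz, hghalf]
  have hkey : (1 - y) ^ (s - 1) * ∑ j ∈ range (d + 1), (d.choose (2 * j) : ℝ) * y ^ j < 1 := by
    rcases eq_or_lt_of_le hy1 with heq | hlt
    · rw [heq, sub_self, zero_pow (show s - 1 ≠ 0 by omega), zero_mul]
      norm_num
    · have hsum : ∑ j ∈ range (d + 1), (d.choose (2 * j) : ℝ) * y ^ j
          ≤ ∑ j ∈ range (d + 1), (((s - 2 + j).choose j : ℝ)) * y ^ j := by
        apply Finset.sum_le_sum
        intro j _
        apply mul_le_mul_of_nonneg_right _ (le_of_lt (pow_pos hy0 j))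
        exact_mod_cast choose_le_choose s d hs hC j
      have h1y : (0 : ℝ) < 1 - y := by linarith
      calc (1 - y) ^ (s - 1) * ∑ j ∈ range (d + 1), (d.choose (2 * j) : ℝ) * y ^ j
          ≤ (1 - y) ^ (s - 1) * ∑ j ∈ range (d + 1), ((s - 2 + j).choose j : ℝ) * y ^ j :=
            mul_le_mul_of_nonneg_left hsum (le_of_lt (pow_pos h1y _))
        _ < 1 := by
            have := lemA (s - 2) d y hy0 hlt
            rwa [show s - 2 + 1 = s - 1 by omega] at this
  -- reduce goal to hkey
  have hpos2 : (0 : ℝ) < (1 / 2 : ℝ) ^ d * 2 := by positivity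
  have h4 : ((1 - y) / 4) ^ (s - 1) = (1 - y) ^ (s - 1) / 4 ^ (s - 1) := div_pow _ _ _
  have h4' : ((1 : ℝ) / 4) ^ (s - 1) = 1 / 4 ^ (s - 1) := by rw [div_pow, one_pow]
  rw [h4, h4']
  have h4pos : (0 : ℝ) < 4 ^ (s - 1) := by positivity
  rw [div_mul_eq_mul_div, div_mul_eq_mul_div, div_lt_div_iff₀ h4pos h4pos]
  have : (1 - y) ^ (s - 1) * ((1 / 2 : ℝ) ^ d
      * (2 * ∑ j ∈ range (d + 1), (d.choose (2 * j) : ℝ) * y ^ j))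
      < 1 * ((1 / 2 : ℝ) ^ d * 2) := by
    calc (1 - y) ^ (s - 1) * ((1 / 2 : ℝ) ^ d
        * (2 * ∑ j ∈ range (d + 1), (d.choose (2 * j) : ℝ) * y ^ j))
        = ((1 - y) ^ (s - 1) * ∑ j ∈ range (d + 1), (d.choose (2 * j) : ℝ) * y ^ j)
            * ((1 / 2 : ℝ) ^ d * 2) := by ring
      _ < 1 * ((1 / 2 : ℝ) ^ d * 2) := by
          exact mul_lt_mul_of_pos_right hkey hpos2
  nlinarith [this, h4pos]
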